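/- Computable partial orders corollary. Let ⪯ be a computable (decidable) partial order on ℕ (reflexive, transitive, antisymmetric, with computable characteristic function of the relation). Then there exist a limit computable set A ⊆ ℕ and sets B_0, B_1, … ⊆ ℕ such that B_i ≡_bfo A for every i ∈ ℕ, and for all i, j ∈ ℕ: B_i ≤₁ B_j if and only if i ⪯ j. Hence i ↦ deg₁(B_i) is an order-embedding of (ℕ, ⪯) into the partially ordered set of 1-degrees contained in the bounded finite-one degree of A. -/

import Mathlib

set_option maxHeartbeats 1000000

/-- One-one reducibility: `B ≤₁ C` via a total computable injective function. -/
def OneOneRed (B C : Set ℕ) : Prop :=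
  ∃ f : ℕ → ℕ, Computable f ∧ Function.Injective f ∧ ∀ x, x ∈ B ↔ f x ∈ C

/-- Strict one-one reducibility: `B <₁ C`. -/
def OneOneLt (B C : Set ℕ) : Prop :=
  OneOneRed B C ∧ ¬ OneOneRed C B

/-- Bounded finite-one reducibility: `B ≤_bfo C` via a total computable function
all of whose fibers have size at most some constant `c ≥ 1`. -/
def BfoRed (B C : Set ℕ) : Prop :=
  ∃ f : ℕ → ℕ, Computable f ∧
    (∃ c : ℕ, 1 ≤ c ∧ ∀ y, {x | f x = y}.encard ≤ (c : ℕ∞)) ∧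
    ∀ x, x ∈ B ↔ f x ∈ C

/-- Bounded finite-one equivalence: `B ≡_bfo C`. -/
def BfoEquiv (B C : Set ℕ) : Prop :=
  BfoRed B C ∧ BfoRed C B

/-- `A` is limit computable (equivalently `A ≤_T ∅'`, i.e. `Δ⁰₂`). -/
def LimitComputable (A : Set ℕ) : Prop :=
  ∃ g : ℕ → ℕ → Bool, Computable₂ g ∧
    ∀ n, ∃ s₀, ∀ s, s₀ ≤ s → (g s n = true ↔ n ∈ A)

/-- `a_k`, the left endpoint of the `k`-th block `I_k = [a_k, a_{k+1})`;
`a_0 = 0` and `a_{k+1} = a_k + k!`. -/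
def blockStart (k : ℕ) : ℕ := ∑ m ∈ Finset.range k, Nat.factorial m



open Nat.Partrec (Code)
open Nat.Partrec.Code

namespace CPO

/-- stretch factor of column `k` in the set `B j`. -/
def str (le : ℕ → ℕ → Bool) (k j : ℕ) : ℕ := if le k j then 2 else 1

/-- lookup in an association list (leftmost match has priority). -/
def mlook (n : ℕ) : List (ℕ × Bool) → Option Bool
  | [] => none
  | p :: L => if p.1 = n then some p.2 else mlook n L

/-- max key occurring in the list. -/
def maxKey : List (ℕ × Bool) → ℕ
  | [] => 0
  | p :: L => max p.1 (maxKey L)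

/-- decoded components of a stage number -/
def stE (t : ℕ) : ℕ := t.unpair.1
def stI (t : ℕ) : ℕ := t.unpair.2.unpair.1
def stJ (t : ℕ) : ℕ := t.unpair.2.unpair.2

/-- the fresh witness coordinate at stage `t` with state `L`. -/
def wit (t : ℕ) (L : List (ℕ × Bool)) : ℕ := maxKey L + t + 1

/-- the witness key (bit position in `A`). -/
def wKey (t : ℕ) (L : List (ℕ × Bool)) : ℕ := Nat.pair (stI t) (wit t L)

/-- the bit position in `A` controlling membership of position `v` in `B j`. -/
def bpos (le : ℕ → ℕ → Bool) (j v : ℕ) : ℕ :=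
  Nat.pair v.unpair.1 (v.unpair.2 / str le v.unpair.1 j)

/-- first candidate restraint position (pure version, booleans supplied). -/
def pb0 (q : (Bool × Bool × Bool) × (ℕ × List (ℕ × Bool)) × ℕ × ℕ) : ℕ :=
  Nat.pair q.2.2.1.unpair.1 (q.2.2.1.unpair.2 / if q.1.2.1 = true then 2 else 1)

/-- second candidate restraint position. -/
def pb1 (q : (Bool × Bool × Bool) × (ℕ × List (ℕ × Bool)) × ℕ × ℕ) : ℕ :=
  Nat.pair q.2.2.2.unpair.1 (q.2.2.2.unpair.2 / if q.1.2.2 = true then 2 else 1)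

/-- the selected restraint position. -/
def pbs (q : (Bool × Bool × Bool) × (ℕ × List (ℕ × Bool)) × ℕ × ℕ) : ℕ :=
  if pb0 q = wKey q.2.1.1 q.2.1.2 then pb1 q else pb0 q

/-- the pure part of a construction step, with the order-oracle answers
supplied as booleans. -/
def coreP (q : (Bool × Bool × Bool) × (ℕ × List (ℕ × Bool)) × ℕ × ℕ) :
    List (ℕ × Bool) :=
  if q.1.1 = true then q.2.1.2
  else if q.2.2.1 = q.2.2.2 then q.2.1.2
  else
    Option.casesOn (mlook (pbs q) q.2.1.2)
      ((wKey q.2.1.1 q.2.1.2, true) :: (pbs q, false) :: q.2.1.2)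
      (fun v => (wKey q.2.1.1 q.2.1.2, !v) :: q.2.1.2)

/-- the core of one construction step, given the (possibly unknown) values
of the candidate reduction on the two test points. -/
def core (le : ℕ → ℕ → Bool) (t : ℕ) (L : List (ℕ × Bool)) :
    Option ℕ → Option ℕ → List (ℕ × Bool)
  | some v0, some v1 =>
      coreP ((le (stI t) (stJ t), le v0.unpair.1 (stJ t), le v1.unpair.1 (stJ t)),
        (t, L), v0, v1)
  | _, _ => L

/-- the two test points of stage `t` at state `L`. -/
def tp0 (t : ℕ) (L : List (ℕ × Bool)) : ℕ := Nat.pair (stI t) (2 * wit t L)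
def tp1 (t : ℕ) (L : List (ℕ × Bool)) : ℕ := Nat.pair (stI t) (2 * wit t L + 1)

open Classical in
/-- classical conversion of a partial value to an option. -/
noncomputable def pToOpt (o : Part ℕ) : Option ℕ :=
  if h : o.Dom then some (o.get h) else none

theorem pToOpt_eq_some {o : Part ℕ} {a : ℕ} (h : a ∈ o) : pToOpt o = some a := by
  rcases h with ⟨hd, ha⟩
  simp [pToOpt, hd, ha]

theorem pToOpt_eq_none {o : Part ℕ} (h : ¬ o.Dom) : pToOpt o = none := by
  simp [pToOpt, h]

/-- the true (oracle) construction step. -/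
noncomputable def trueStep (le : ℕ → ℕ → Bool) (t : ℕ) (L : List (ℕ × Bool)) :
    List (ℕ × Bool) :=
  core le t L (pToOpt (eval (Denumerable.ofNat Code (stE t)) (tp0 t L)))
    (pToOpt (eval (Denumerable.ofNat Code (stE t)) (tp1 t L)))

/-- the true construction: state after `T` stages. -/
noncomputable def trueState (le : ℕ → ℕ → Bool) : ℕ → List (ℕ × Bool)
  | 0 => []
  | T + 1 => trueStep le T (trueState le T)

/-- the computable approximation of one step, with computations bounded by `s`. -/
def stepA (le : ℕ → ℕ → Bool) (s t : ℕ) (L : List (ℕ × Bool)) : List (ℕ × Bool) :=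
  core le t L (evaln s (Denumerable.ofNat Code (stE t)) (tp0 t L))
    (evaln s (Denumerable.ofNat Code (stE t)) (tp1 t L))

/-- approximated state after `T` stages with bound `s`. -/
def approx (le : ℕ → ℕ → Bool) (s : ℕ) : ℕ → List (ℕ × Bool)
  | 0 => []
  | T + 1 => stepA le s T (approx le s T)

/-- The limit set `A`. -/
def Aset (le : ℕ → ℕ → Bool) : Set ℕ :=
  {n | ∃ T, mlook n (trueState le T) = some true}

/-- The sets `B i`. -/
def Bset (le : ℕ → ℕ → Bool) (i : ℕ) : Set ℕ :=
  {x | bpos le i x ∈ Aset le}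

/-! ### basic lemmas -/

theorem mlook_maxKey {n : ℕ} {L : List (ℕ × Bool)} (h : maxKey L < n) :
    mlook n L = none := by
  induction L with
  | nil => rfl
  | cons p L ih =>
      simp only [maxKey, max_lt_iff] at h
      simp only [mlook, if_neg (by omega : ¬ p.1 = n)]
      exact ih h.2

theorem mlook_wKey {t : ℕ} {L : List (ℕ × Bool)} : mlook (wKey t L) L = none :=
  mlook_maxKey (lt_of_lt_of_le (by unfold wit; omega) (Nat.right_le_pair _ _))

/-- shape of a construction step. -/
theorem core_shape (le : ℕ → ℕ → Bool) (t : ℕ) (L : List (ℕ × Bool))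
    (o0 o1 : Option ℕ) :
    core le t L o0 o1 = L ∨
    (∃ v, core le t L o0 o1 = (wKey t L, v) :: L) ∨
    (∃ bs, mlook bs L = none ∧
      core le t L o0 o1 = (wKey t L, true) :: (bs, false) :: L) := by
  rcases o0 with _ | v0 <;> rcases o1 with _ | v1
  · left; rfl
  · left; rfl
  · left; rfl
  · simp only [core, coreP]
    split
    · left; rfl
    · split
      · left; rfl
      · rcases hm : mlook (pbs ((le (stI t) (stJ t), le v0.unpair.1 (stJ t),
            le v1.unpair.1 (stJ t)), (t, L), v0, v1)) L with _ | v
        · right; right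
          exact ⟨_, hm, rfl⟩
        · right; left
          exact ⟨!v, rfl⟩

/-- persistence under one step. -/
theorem mlook_cons {n k : ℕ} {v : Bool} {L : List (ℕ × Bool)} :
    mlook n ((k, v) :: L) = if k = n then some v else mlook n L := rfl

theorem mlook_step {le t L n b} (h : mlook n L = some b) (o0 o1 : Option ℕ) :
    mlook n (core le t L o0 o1) = some b := by
  have hw : wKey t L ≠ n := fun e => by
    have hk := @mlook_wKey t L
    rw [e, h] at hk
    exact Option.some_ne_none _ hk
  rcases core_shape le t L o0 o1 with hc | ⟨v, hc⟩ | ⟨bs, hbs, hc⟩ <;> rw [hc]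
  · exact h
  · rw [mlook_cons, if_neg hw]; exact h
  · have hbn : bs ≠ n := fun e => by subst e; rw [hbs] at h; cases h
    rw [mlook_cons, if_neg hw, mlook_cons, if_neg hbn]; exact h

/-- persistence across stages. -/
theorem mlook_mono {le n b} {T T' : ℕ} (hT : T ≤ T')
    (h : mlook n (trueState le T) = some b) :
    mlook n (trueState le T') = some b := by
  induction T', hT using Nat.le_induction with
  | base => exact h
  | succ T' _ ih => exact mlook_step ih _ _

/-- `true` entries with key `n` appear by stage `n`. -/
theorem wKey_ge {t : ℕ} {L : List (ℕ × Bool)} : t + 1 ≤ wKey t L :=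
  le_trans (by unfold wit; omega) (Nat.right_le_pair _ _)

theorem mlook_early {le n T} (h : mlook n (trueState le T) = some true) :
    mlook n (trueState le n) = some true := by
  induction T with
  | zero => simp [trueState, mlook] at h
  | succ T ih =>
      rcases le_or_gt (T + 1) n with hle | hlt
      · exact mlook_mono hle h
      · -- n ≤ T, so any new entry at stage T has key ≥ T+1 > n
        have hwn : wKey T (trueState le T) ≠ n :=
          fun e => absurd (e ▸ wKey_ge) (by omega)
        have hstep : trueState le (T+1) = trueStep le T (trueState le T) := rfl
        rcases core_shape le T (trueState le T)
            (pToOpt (eval (Denumerable.ofNat Code (stE T)) (tp0 T (trueState le T))))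
            (pToOpt (eval (Denumerable.ofNat Code (stE T)) (tp1 T (trueState le T))))
          with hc | ⟨v, hc⟩ | ⟨bs, hbs, hc⟩ <;>
          rw [hstep, trueStep, hc] at h
        · exact ih h
        · rw [mlook_cons, if_neg hwn] at h
          exact ih h
        · rw [mlook_cons, if_neg hwn, mlook_cons] at h
          split at h
          · exact absurd h (by simp)
          · exact ih h

theorem mem_Aset_iff {le n} : n ∈ Aset le ↔ mlook n (trueState le n) = some true :=
  ⟨fun ⟨_, h⟩ => mlook_early h, fun h => ⟨n, h⟩⟩

/-- stabilization of the approximation. -/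
theorem approx_stable (le : ℕ → ℕ → Bool) (T : ℕ) :
    ∃ s₀, ∀ s, s₀ ≤ s → approx le s T = trueState le T := by
  induction T with
  | zero => exact ⟨0, fun _ _ => rfl⟩
  | succ T ih =>
      obtain ⟨s₀, ih⟩ := ih
      set L := trueState le T with hL
      set c := Denumerable.ofNat Code (stE T) with hc
      have key : ∀ x : ℕ, ∃ s₁, ∀ s, s₁ ≤ s →
          evaln s c x = pToOpt (eval c x) := by
        intro x
        by_cases hd : (eval c x).Dom
        · obtain ⟨k, hk⟩ := evaln_complete.1 (Part.get_mem hd)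
          refine ⟨k, fun s hs => ?_⟩
          have hm : (eval c x).get hd ∈ evaln s c x := evaln_mono hs hk
          rw [Option.mem_def.1 hm, pToOpt_eq_some (Part.get_mem hd)]
        · refine ⟨0, fun s _ => ?_⟩
          rw [pToOpt_eq_none hd]
          rcases he : evaln s c x with _ | v
          · rfl
          · exact absurd (Part.dom_iff_mem.2 ⟨v, evaln_sound he⟩) hd
      obtain ⟨s₁, h1⟩ := key (tp0 T L)
      obtain ⟨s₂, h2⟩ := key (tp1 T L)
      refine ⟨max s₀ (max s₁ s₂), fun s hs => ?_⟩
      have e1 : approx le s (T + 1) = stepA le s T (approx le s T) := rfl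
      rw [e1, ih s (le_trans (le_max_left _ _) hs)]
      show stepA le s T L = trueStep le T L
      rw [stepA, trueStep, ← hc,
        h1 s (le_trans (le_trans (le_max_left _ _) (le_max_right _ _)) hs),
        h2 s (le_trans (le_trans (le_max_right _ _) (le_max_right _ _)) hs)]

/-! ### computability of the approximation -/

theorem mlook_eq_foldr (n : ℕ) (L : List (ℕ × Bool)) :
    mlook n L = L.foldr (fun p acc => if p.1 = n then some p.2 else acc) none := by
  induction L with
  | nil => rfl
  | cons p L ih => simp [mlook, List.foldr, ih]

theorem maxKey_eq_foldr (L : List (ℕ × Bool)) :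
    maxKey L = L.foldr (fun p m => max p.1 m) 0 := by
  induction L with
  | nil => rfl
  | cons p L ih => simp [maxKey, List.foldr, ih]

theorem mlook_primrec : Primrec₂ mlook := by
  have h := Primrec.list_foldr (α := ℕ × List (ℕ × Bool)) (β := ℕ × Bool)
    (σ := Option Bool) (f := Prod.snd) (g := fun _ => none)
    (h := fun a x => if x.1.1 = a.1 then some x.1.2 else x.2)
    Primrec.snd (Primrec.const none)
    (Primrec.ite
      (Primrec.eq.comp (Primrec.fst.comp (Primrec.fst.comp Primrec.snd))
        (Primrec.fst.comp Primrec.fst))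
      (Primrec.option_some.comp (Primrec.snd.comp (Primrec.fst.comp Primrec.snd)))
      (Primrec.snd.comp Primrec.snd))
  exact h.of_eq fun p => (mlook_eq_foldr p.1 p.2).symm

theorem maxKey_primrec : Primrec maxKey := by
  have h := Primrec.list_foldr (α := List (ℕ × Bool)) (β := ℕ × Bool) (σ := ℕ)
    (f := id) (g := fun _ => 0) (h := fun _ x => max x.1.1 x.2)
    Primrec.id (Primrec.const 0)
    (Primrec.nat_max.comp (Primrec.fst.comp (Primrec.fst.comp Primrec.snd))
      (Primrec.snd.comp Primrec.snd))
  exact h.of_eq fun L => (maxKey_eq_foldr L).symm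

theorem stE_primrec : Primrec stE := Primrec.fst.comp Primrec.unpair
theorem stI_primrec : Primrec stI :=
  Primrec.fst.comp (Primrec.unpair.comp (Primrec.snd.comp Primrec.unpair))
theorem stJ_primrec : Primrec stJ :=
  Primrec.snd.comp (Primrec.unpair.comp (Primrec.snd.comp Primrec.unpair))

theorem wit_primrec : Primrec fun p : ℕ × List (ℕ × Bool) => wit p.1 p.2 :=
  Primrec.nat_add.comp
    (Primrec.nat_add.comp (maxKey_primrec.comp Primrec.snd) Primrec.fst)
    (Primrec.const 1)

theorem wKey_primrec : Primrec fun p : ℕ × List (ℕ × Bool) => wKey p.1 p.2 :=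
  Primrec₂.natPair.comp (stI_primrec.comp Primrec.fst) wit_primrec

theorem tp0_primrec : Primrec fun p : ℕ × List (ℕ × Bool) => tp0 p.1 p.2 :=
  Primrec₂.natPair.comp (stI_primrec.comp Primrec.fst)
    (Primrec.nat_mul.comp (Primrec.const 2) wit_primrec)

theorem tp1_primrec : Primrec fun p : ℕ × List (ℕ × Bool) => tp1 p.1 p.2 :=
  Primrec₂.natPair.comp (stI_primrec.comp Primrec.fst)
    (Primrec.nat_add.comp (Primrec.nat_mul.comp (Primrec.const 2) wit_primrec)
      (Primrec.const 1))

private abbrev Q := (Bool × Bool × Bool) × (ℕ × List (ℕ × Bool)) × ℕ × ℕ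

theorem pb0_primrec : Primrec pb0 := by
  have v0q : Primrec fun q : Q => q.2.2.1 :=
    Primrec.fst.comp (Primrec.snd.comp Primrec.snd)
  exact Primrec₂.natPair.comp (Primrec.fst.comp (Primrec.unpair.comp v0q))
    (Primrec.nat_div.comp (Primrec.snd.comp (Primrec.unpair.comp v0q))
      (Primrec.ite
        (Primrec.eq.comp (Primrec.fst.comp (Primrec.snd.comp Primrec.fst))
          (Primrec.const true))
        (Primrec.const 2) (Primrec.const 1)))

theorem pb1_primrec : Primrec pb1 := by
  have v1q : Primrec fun q : Q => q.2.2.2 :=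
    Primrec.snd.comp (Primrec.snd.comp Primrec.snd)
  exact Primrec₂.natPair.comp (Primrec.fst.comp (Primrec.unpair.comp v1q))
    (Primrec.nat_div.comp (Primrec.snd.comp (Primrec.unpair.comp v1q))
      (Primrec.ite
        (Primrec.eq.comp (Primrec.snd.comp (Primrec.snd.comp Primrec.fst))
          (Primrec.const true))
        (Primrec.const 2) (Primrec.const 1)))

theorem wq_primrec : Primrec fun q : Q => wKey q.2.1.1 q.2.1.2 :=
  wKey_primrec.comp (Primrec.fst.comp Primrec.snd)

theorem pbs_primrec : Primrec pbs :=
  Primrec.ite (Primrec.eq.comp pb0_primrec wq_primrec) pb1_primrec pb0_primrec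

theorem coreP_primrec : Primrec coreP := by
  have Lq : Primrec fun q : Q => q.2.1.2 :=
    Primrec.snd.comp (Primrec.fst.comp Primrec.snd)
  refine Primrec.ite
    (Primrec.eq.comp (Primrec.fst.comp Primrec.fst) (Primrec.const true)) Lq
    (Primrec.ite
      (Primrec.eq.comp (Primrec.fst.comp (Primrec.snd.comp Primrec.snd))
        (Primrec.snd.comp (Primrec.snd.comp Primrec.snd))) Lq
      (Primrec.option_casesOn (mlook_primrec.comp pbs_primrec Lq)
        (Primrec.list_cons.comp (Primrec.pair wq_primrec (Primrec.const true))
          (Primrec.list_cons.comp (Primrec.pair pbs_primrec (Primrec.const false)) Lq))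
        ?_))
  exact (Primrec.list_cons.comp
    (Primrec.pair (wq_primrec.comp Primrec.fst)
      ((Primrec.dom_bool Bool.not).comp Primrec.snd))
    (Lq.comp Primrec.fst)).to₂

theorem core_comp {le : ℕ → ℕ → Bool} (hle : Computable₂ le) :
    Computable fun p : (ℕ × List (ℕ × Bool)) × Option ℕ × Option ℕ =>
      core le p.1.1 p.1.2 p.2.1 p.2.2 := by
  have hg2 : Computable fun y : (((ℕ × List (ℕ × Bool)) × Option ℕ × Option ℕ) × ℕ) × ℕ =>
      coreP ((le (stI y.1.1.1.1) (stJ y.1.1.1.1), le y.1.2.unpair.1 (stJ y.1.1.1.1),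
          le y.2.unpair.1 (stJ y.1.1.1.1)), (y.1.1.1.1, y.1.1.1.2), y.1.2, y.2) := by
    have tY : Primrec fun y : (((ℕ × List (ℕ × Bool)) × Option ℕ × Option ℕ) × ℕ) × ℕ =>
        y.1.1.1.1 := Primrec.fst.comp (Primrec.fst.comp (Primrec.fst.comp Primrec.fst))
    have LY : Primrec fun y : (((ℕ × List (ℕ × Bool)) × Option ℕ × Option ℕ) × ℕ) × ℕ =>
        y.1.1.1.2 := Primrec.snd.comp (Primrec.fst.comp (Primrec.fst.comp Primrec.fst))
    have v0Y : Primrec fun y : (((ℕ × List (ℕ × Bool)) × Option ℕ × Option ℕ) × ℕ) × ℕ =>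
        y.1.2 := Primrec.snd.comp Primrec.fst
    have v1Y : Primrec fun y : (((ℕ × List (ℕ × Bool)) × Option ℕ × Option ℕ) × ℕ) × ℕ =>
        y.2 := Primrec.snd
    exact coreP_primrec.to_comp.comp (Computable.pair
      (Computable.pair
        (hle.comp (stI_primrec.comp tY).to_comp (stJ_primrec.comp tY).to_comp)
        (Computable.pair
          (hle.comp ((Primrec.fst.comp (Primrec.unpair.comp v0Y)).to_comp)
            (stJ_primrec.comp tY).to_comp)
          (hle.comp ((Primrec.fst.comp (Primrec.unpair.comp v1Y)).to_comp)
            (stJ_primrec.comp tY).to_comp)))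
      (Computable.pair (Computable.pair tY.to_comp LY.to_comp)
        (Computable.pair v0Y.to_comp v1Y.to_comp)))
  have inner : Computable₂ fun (p : (ℕ × List (ℕ × Bool)) × Option ℕ × Option ℕ) (v0 : ℕ) =>
      (Option.casesOn p.2.2 p.1.2 (fun v1 =>
        coreP ((le (stI p.1.1) (stJ p.1.1), le v0.unpair.1 (stJ p.1.1),
          le v1.unpair.1 (stJ p.1.1)), (p.1.1, p.1.2), v0, v1)) : List (ℕ × Bool)) := by
    exact Computable.option_casesOn
      ((Primrec.snd.comp (Primrec.snd.comp Primrec.fst)).to_comp)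
      ((Primrec.snd.comp (Primrec.fst.comp Primrec.fst)).to_comp)
      hg2
  have main := Computable.option_casesOn
    (o := fun p : (ℕ × List (ℕ × Bool)) × Option ℕ × Option ℕ => p.2.1)
    ((Primrec.fst.comp Primrec.snd).to_comp)
    ((Primrec.snd.comp Primrec.fst).to_comp) inner
  exact main.of_eq fun p => by
    rcases p with ⟨⟨t, L⟩, o0, o1⟩
    rcases o0 with _ | v0 <;> rcases o1 with _ | v1 <;> rfl

theorem stepA_comp {le : ℕ → ℕ → Bool} (hle : Computable₂ le) :
    Computable fun y : (ℕ × ℕ) × ℕ × List (ℕ × Bool) =>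
      stepA le y.1.1 y.2.1 y.2.2 := by
  have ev : ∀ (tp : ℕ × List (ℕ × Bool) → ℕ), Primrec tp →
      Computable fun y : (ℕ × ℕ) × ℕ × List (ℕ × Bool) =>
        evaln y.1.1 (Denumerable.ofNat Code (stE y.2.1)) (tp y.2) := by
    intro tp htp
    exact primrec_evaln.to_comp.comp (Computable.pair
      (Computable.pair ((Primrec.fst.comp Primrec.fst).to_comp)
        (((Primrec.ofNat Code).comp (stE_primrec.comp (Primrec.fst.comp Primrec.snd))).to_comp))
      ((htp.comp Primrec.snd).to_comp))
  exact ((core_comp hle).comp (Computable.pair Computable.snd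
    (Computable.pair (ev _ tp0_primrec) (ev _ tp1_primrec)))).of_eq fun y => rfl

theorem approx_eq_rec (le : ℕ → ℕ → Bool) (s n : ℕ) :
    approx le s n = Nat.rec [] (fun t L => stepA le s t L) n := by
  induction n with
  | zero => rfl
  | succ n ih => simp only [approx, ih]

theorem approx_comp {le : ℕ → ℕ → Bool} (hle : Computable₂ le) :
    Computable fun p : ℕ × ℕ => approx le p.1 p.2 := by
  have h := Computable.nat_rec (α := ℕ × ℕ) (f := fun a => a.2)
    (g := fun _ => ([] : List (ℕ × Bool)))
    (h := fun a p => stepA le a.1 p.1 p.2)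
    Computable.snd (Computable.const []) (stepA_comp hle)
  exact h.of_eq fun p => (approx_eq_rec le p.1 p.2).symm

/-- the limit-computable approximation of `Aset le`. -/
def gApprox (le : ℕ → ℕ → Bool) (s n : ℕ) : Bool :=
  (mlook n (approx le s n)).getD false

theorem gApprox_comp {le : ℕ → ℕ → Bool} (hle : Computable₂ le) :
    Computable₂ (gApprox le) := by
  have ho : Computable fun p : ℕ × ℕ => mlook p.2 (approx le p.1 p.2) :=
    mlook_primrec.to_comp.comp Computable.snd (approx_comp hle)
  exact (Computable.option_casesOn ho (Computable.const false)
    ((Computable.snd).of_eq fun p => rfl).to₂).of_eq fun p => by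
      rcases hm : mlook p.2 (approx le p.1 p.2) with _ | v <;>
        simp [gApprox, hm]

theorem gApprox_limit (le : ℕ → ℕ → Bool) (n : ℕ) :
    ∃ s₀, ∀ s, s₀ ≤ s → (gApprox le s n = true ↔ n ∈ Aset le) := by
  obtain ⟨s₀, hs⟩ := approx_stable le n
  refine ⟨s₀, fun s h => ?_⟩
  rw [mem_Aset_iff, gApprox, hs s h]
  rcases hm : mlook n (trueState le n) with _ | v
  · simp
  · rcases v <;> simp

/-! ### the reductions -/

theorem str_comp {le : ℕ → ℕ → Bool} (hle : Computable₂ le) :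
    Computable₂ (str le) := by
  have : Computable fun p : ℕ × ℕ => bif le p.1 p.2 then (2 : ℕ) else 1 :=
    Computable.cond hle (Computable.const 2) (Computable.const 1)
  exact this.of_eq fun p => by rcases h : le p.1 p.2 <;> simp [str, h]

theorem str_pos (le : ℕ → ℕ → Bool) (k j : ℕ) : 0 < str le k j := by
  rcases h : le k j <;> simp [str, h]

theorem unpair_ext {x y : ℕ} (h1 : x.unpair.1 = y.unpair.1)
    (h2 : x.unpair.2 = y.unpair.2) : x = y := by
  rw [← Nat.pair_unpair x, ← Nat.pair_unpair y, h1, h2]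

theorem pair_eq_iff {a b y : ℕ} :
    Nat.pair a b = y ↔ a = y.unpair.1 ∧ b = y.unpair.2 := by
  constructor
  · intro h
    have := congrArg Nat.unpair h
    rw [Nat.unpair_pair, Prod.ext_iff] at this
    exact this
  · rintro ⟨rfl, rfl⟩
    exact Nat.pair_unpair y

theorem pair_eq_pair_iff {a b c d : ℕ} :
    Nat.pair a b = Nat.pair c d ↔ a = c ∧ b = d := by
  rw [pair_eq_iff, Nat.unpair_pair]

/-- `A ≤₁ B i` via stretching. -/
theorem A_le_B (le : ℕ → ℕ → Bool) (hle : Computable₂ le) (i : ℕ) :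
    ∃ f : ℕ → ℕ, Computable f ∧ Function.Injective f ∧
      ∀ z, z ∈ Aset le ↔ f z ∈ Bset le i := by
  refine ⟨fun z => Nat.pair z.unpair.1 (str le z.unpair.1 i * z.unpair.2), ?_, ?_, ?_⟩
  · exact Primrec₂.natPair.to_comp.comp
      ((Primrec.fst.comp Primrec.unpair).to_comp)
      (Primrec.nat_mul.to_comp.comp
        ((str_comp hle).comp ((Primrec.fst.comp Primrec.unpair).to_comp)
          (Computable.const i))
        ((Primrec.snd.comp Primrec.unpair).to_comp))
  · intro z z' h
    rw [pair_eq_pair_iff] at h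
    obtain ⟨h1, h2⟩ := h
    rw [h1] at h2
    exact unpair_ext h1 (Nat.eq_of_mul_eq_mul_left (str_pos le z'.unpair.1 i) h2)
  · intro z
    show _ ↔ bpos le i _ ∈ Aset le
    rw [bpos, Nat.unpair_pair]
    simp only
    rw [Nat.mul_div_cancel_left _ (str_pos le z.unpair.1 i), Nat.pair_unpair]

/-- `B i ≤_bfo A` via the (at most 2-to-1) projection. -/
theorem B_bfo_A (le : ℕ → ℕ → Bool) (hle : Computable₂ le) (i : ℕ) :
    Computable (bpos le i) ∧
      (∀ y, {x | bpos le i x = y}.encard ≤ (2 : ℕ∞)) := by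
  constructor
  · exact Primrec₂.natPair.to_comp.comp
      ((Primrec.fst.comp Primrec.unpair).to_comp)
      (Primrec.nat_div.to_comp.comp
        ((Primrec.snd.comp Primrec.unpair).to_comp)
        ((str_comp hle).comp ((Primrec.fst.comp Primrec.unpair).to_comp)
          (Computable.const i)))
  · intro y
    have hsub : {x | bpos le i x = y} ⊆
        {Nat.pair y.unpair.1 (str le y.unpair.1 i * y.unpair.2),
         Nat.pair y.unpair.1 (str le y.unpair.1 i * y.unpair.2 + 1)} := by
      intro x hx
      simp only [Set.mem_setOf_eq, bpos] at hx
      rw [pair_eq_iff] at hx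
      obtain ⟨h1, h2⟩ := hx
      rw [h1] at h2
      have hx' : x = Nat.pair y.unpair.1 x.unpair.2 :=
        unpair_ext (by simp [Nat.unpair_pair, h1]) (by simp [Nat.unpair_pair])
      simp only [Set.mem_insert_iff, Set.mem_singleton_iff]
      rcases hb : le y.unpair.1 i with _ | _
      · have hstr : str le y.unpair.1 i = 1 := by simp [str, hb]
        rw [hstr] at h2 ⊢
        rw [Nat.div_one] at h2
        left; rw [one_mul, ← h2]; exact hx'
      · have hstr : str le y.unpair.1 i = 2 := by simp [str, hb]
        rw [hstr] at h2 ⊢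
        have hcase : x.unpair.2 = 2 * y.unpair.2 ∨ x.unpair.2 = 2 * y.unpair.2 + 1 := by
          omega
        rcases hcase with h | h
        · left; rw [← h]; exact hx'
        · right; rw [← h]; exact hx'
    calc {x | bpos le i x = y}.encard
        ≤ ({Nat.pair y.unpair.1 (str le y.unpair.1 i * y.unpair.2),
            Nat.pair y.unpair.1 (str le y.unpair.1 i * y.unpair.2 + 1)} : Set ℕ).encard :=
          Set.encard_mono hsub
      _ ≤ 2 := by
          refine le_trans (Set.encard_insert_le _ _) ?_
          rw [Set.encard_singleton]; norm_num

/-- the one-one reduction `B i ≤₁ B j` when `le i j`. -/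
theorem B_le_B (le : ℕ → ℕ → Bool) (hle : Computable₂ le)
    (htrans : ∀ i j k, le i j = true → le j k = true → le i k = true)
    {i j : ℕ} (hij : le i j = true) :
    ∃ f : ℕ → ℕ, Computable f ∧ Function.Injective f ∧
      ∀ x, x ∈ Bset le i ↔ f x ∈ Bset le j := by
  refine ⟨fun x => Nat.pair x.unpair.1
    (if le x.unpair.1 i = le x.unpair.1 j then x.unpair.2 else 2 * x.unpair.2),
    ?_, ?_, ?_⟩
  · refine Primrec₂.natPair.to_comp.comp
      ((Primrec.fst.comp Primrec.unpair).to_comp) ?_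
    have h1 : Computable fun x : ℕ => le x.unpair.1 i :=
      hle.comp ((Primrec.fst.comp Primrec.unpair).to_comp) (Computable.const i)
    have h2 : Computable fun x : ℕ => le x.unpair.1 j :=
      hle.comp ((Primrec.fst.comp Primrec.unpair).to_comp) (Computable.const j)
    have hcnd : Computable fun x : ℕ =>
        (decide (le x.unpair.1 i = le x.unpair.1 j) : Bool) :=
      (Primrec.eq.decide.to_comp).comp h1 h2
    have := Computable.cond hcnd
      ((Primrec.snd.comp Primrec.unpair).to_comp)
      (Primrec.nat_mul.to_comp.comp (Computable.const 2)
        ((Primrec.snd.comp Primrec.unpair).to_comp))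
    exact this.of_eq fun x => by
      by_cases h : le x.unpair.1 i = le x.unpair.1 j <;> simp [h]
  · intro x x' h
    rw [pair_eq_pair_iff] at h
    obtain ⟨h1, h2⟩ := h
    rw [h1] at h2
    refine unpair_ext h1 ?_
    by_cases hc : le x'.unpair.1 i = le x'.unpair.1 j
    · rw [if_pos hc, if_pos hc] at h2; exact h2
    · rw [if_neg hc, if_neg hc] at h2; omega
  · intro x
    show bpos le i x ∈ Aset le ↔ bpos le j _ ∈ Aset le
    have key : bpos le j (Nat.pair x.unpair.1
        (if le x.unpair.1 i = le x.unpair.1 j then x.unpair.2 else 2 * x.unpair.2))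
        = bpos le i x := by
      rw [bpos, bpos, Nat.unpair_pair]
      simp only
      rcases hki : le x.unpair.1 i with _ | _ <;> rcases hkj : le x.unpair.1 j with _ | _
      · simp [str, hki, hkj]
      · rw [if_neg (by simp [hki, hkj])]
        rw [str, str, hki, hkj]
        simp [Nat.mul_div_cancel_left]
      · exact absurd (htrans _ _ _ hki hij) (by simp [hkj])
      · simp [str, hki, hkj]
    rw [key]

/-! ### the diagonalization -/

theorem Aset_iff_of_mlook {le : ℕ → ℕ → Bool} {n : ℕ} {b : Bool} {T : ℕ}
    (h : mlook n (trueState le T) = some b) : n ∈ Aset le ↔ b = true := by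
  constructor
  · rintro ⟨T', h'⟩
    have h1 := mlook_mono (le_max_left T T') h
    have h2 := mlook_mono (le_max_right T T') h'
    rw [h1] at h2
    exact (Option.some.inj h2).symm ▸ rfl
  · rintro rfl; exact ⟨T, h⟩

theorem coreP_eval {le : ℕ → ℕ → Bool} {t : ℕ} {L : List (ℕ × Bool)} {v0 v1 : ℕ}
    (h1 : le (stI t) (stJ t) = false) (h2 : v0 ≠ v1) :
    core le t L (some v0) (some v1) =
      Option.casesOn (mlook (pbs ((le (stI t) (stJ t), le v0.unpair.1 (stJ t),
          le v1.unpair.1 (stJ t)), (t, L), v0, v1)) L)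
        ((wKey t L, true) :: (pbs ((le (stI t) (stJ t), le v0.unpair.1 (stJ t),
          le v1.unpair.1 (stJ t)), (t, L), v0, v1), false) :: L)
        (fun v => (wKey t L, !v) :: L) := by
  show coreP _ = _
  simp only [coreP]
  rw [if_neg (by simp [h1]), if_neg h2]

theorem not_B_le_B (le : ℕ → ℕ → Bool)
    (hrefl : ∀ i, le i i = true) {i j : ℕ} (hij : le i j = false)
    (f : ℕ → ℕ) (hf : Computable f) (hinj : Function.Injective f)
    (hred : ∀ x, x ∈ Bset le i ↔ f x ∈ Bset le j) : False := by
  obtain ⟨c, hc⟩ := exists_code.1 (Partrec.nat_iff.1 hf)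
  set t := Nat.pair (Encodable.encode c) (Nat.pair i j) with ht
  have hstE : stE t = Encodable.encode c := by simp [stE, ht, Nat.unpair_pair]
  have hstI : stI t = i := by simp [stI, ht, Nat.unpair_pair]
  have hstJ : stJ t = j := by simp [stJ, ht, Nat.unpair_pair]
  set L := trueState le t with hLdef
  have hcode : Denumerable.ofNat Code (stE t) = c := by
    rw [hstE]; exact Denumerable.ofNat_encode c
  have hev : ∀ x, pToOpt (eval (Denumerable.ofNat Code (stE t)) x) = some (f x) := by
    intro x
    rw [hcode, hc]
    exact pToOpt_eq_some (Part.mem_some (f x))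
  set a0 := f (tp0 t L) with ha0
  set a1 := f (tp1 t L) with ha1
  have hne : a0 ≠ a1 := by
    intro e
    have h' := hinj e
    rw [tp0, tp1, pair_eq_pair_iff] at h'
    omega
  have hstep : trueState le (t + 1) = core le t L (some a0) (some a1) := by
    show trueStep le t L = _
    rw [trueStep, hev, hev]
  have hIJ : le (stI t) (stJ t) = false := by rw [hstI, hstJ]; exact hij
  rw [coreP_eval hIJ hne] at hstep
  -- identify the selected position
  have hb0 : pb0 ((le (stI t) (stJ t), le a0.unpair.1 (stJ t), le a1.unpair.1 (stJ t)),
      (t, L), a0, a1) = bpos le j a0 := by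
    rw [← hstJ]; rfl
  have hb1 : pb1 ((le (stI t) (stJ t), le a0.unpair.1 (stJ t), le a1.unpair.1 (stJ t)),
      (t, L), a0, a1) = bpos le j a1 := by
    rw [← hstJ]; rfl
  have hpbs : pbs ((le (stI t) (stJ t), le a0.unpair.1 (stJ t), le a1.unpair.1 (stJ t)),
      (t, L), a0, a1) =
      (if bpos le j a0 = wKey t L then bpos le j a1 else bpos le j a0) := by
    rw [pbs, hb0, hb1]
  rw [hpbs] at hstep
  set w := wKey t L with hw
  set bs := (if bpos le j a0 = w then bpos le j a1 else bpos le j a0) with hbs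
  -- membership equivalences from the reduction
  have hstri : str le i i = 2 := by simp [str, hrefl i]
  have hw0 : bpos le i (tp0 t L) = w := by
    rw [bpos, tp0, Nat.unpair_pair]
    simp only
    rw [hstI, hstri, Nat.mul_div_cancel_left _ (by norm_num : (0:ℕ) < 2), hw, wKey, hstI]
  have hw1 : bpos le i (tp1 t L) = w := by
    rw [bpos, tp1, Nat.unpair_pair]
    simp only
    rw [hstI, hstri]
    have : (2 * wit t L + 1) / 2 = wit t L := by omega
    rw [this, hw, wKey, hstI]
  have e0 : w ∈ Aset le ↔ bpos le j a0 ∈ Aset le := by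
    have h' := hred (tp0 t L)
    rw [show ((tp0 t L ∈ Bset le i) ↔ (bpos le i (tp0 t L) ∈ Aset le)) from Iff.rfl,
      hw0] at h'
    exact h'
  have e1 : w ∈ Aset le ↔ bpos le j a1 ∈ Aset le := by
    have h' := hred (tp1 t L)
    rw [show ((tp1 t L ∈ Bset le i) ↔ (bpos le i (tp1 t L) ∈ Aset le)) from Iff.rfl,
      hw1] at h'
    exact h'
  have hbsA : bs ∈ Aset le ↔ w ∈ Aset le := by
    rw [hbs]
    by_cases hB0 : bpos le j a0 = w
    · rw [if_pos hB0]; exact e1.symm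
    · rw [if_neg hB0]; exact e0.symm
  -- the selected position differs from the witness position
  have hstrj : str le i j = 1 := by simp [str, hij]
  have hself : ∀ a : ℕ, bpos le j a = w → a = Nat.pair i (wit t L) := by
    intro a hB
    rw [bpos, hw, wKey, hstI, pair_eq_pair_iff] at hB
    obtain ⟨hB1, hB2⟩ := hB
    rw [hB1, hstrj, Nat.div_one] at hB2
    exact unpair_ext (by rw [Nat.unpair_pair]; exact hB1)
      (by rw [Nat.unpair_pair]; exact hB2)
  have hbsne : bs ≠ w := by
    rw [hbs]
    by_cases hB0 : bpos le j a0 = w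
    · rw [if_pos hB0]
      intro hB1
      exact hne ((hself a0 hB0).trans (hself a1 hB1).symm)
    · rw [if_neg hB0]; exact hB0
  -- final contradiction
  rcases hm : mlook bs L with _ | v
  · rw [hm] at hstep
    have hwlook : mlook w (trueState le (t + 1)) = some true := by
      rw [hstep, mlook_cons, if_pos rfl]
    have hbslook : mlook bs (trueState le (t + 1)) = some false := by
      rw [hstep, mlook_cons, if_neg (Ne.symm hbsne), mlook_cons, if_pos rfl]
    have hAw := Aset_iff_of_mlook hwlook
    have hAbs := Aset_iff_of_mlook hbslook
    rw [hAw, hAbs] at hbsA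
    simp at hbsA
  · rw [hm] at hstep
    have hwlook : mlook w (trueState le (t + 1)) = some (!v) := by
      rw [hstep, mlook_cons, if_pos rfl]
    have hbslook : mlook bs (trueState le (t + 1)) = some v := by
      rw [hstep, mlook_cons, if_neg (Ne.symm hbsne)]
      exact hm
    have hAw := Aset_iff_of_mlook hwlook
    have hAbs := Aset_iff_of_mlook hbslook
    rw [hAw, hAbs] at hbsA
    rcases v <;> simp at hbsA

end CPO

/-- **Computable partial orders corollary.**  For any computable (decidable)
partial order `⪯` on `ℕ`, there are a limit computable set `A` and sets
`B_0, B_1, …` with `B_i ≡_bfo A` for every `i` and `B_i ≤₁ B_j ↔ i ⪯ j`.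
Hence `i ↦ deg₁(B_i)` order-embeds `(ℕ, ⪯)` into the 1-degrees contained in
the bounded finite-one degree of `A`. -/
theorem computable_partial_orders
    (le : ℕ → ℕ → Bool) (hle_comp : Computable₂ le)
    (hrefl : ∀ i, le i i = true)
    (htrans : ∀ i j k, le i j = true → le j k = true → le i k = true)
    (hantisymm : ∀ i j, le i j = true → le j i = true → i = j) :
    ∃ (A : Set ℕ) (B : ℕ → Set ℕ),
      LimitComputable A ∧
      (∀ i, BfoEquiv (B i) A) ∧
      (∀ i j, OneOneRed (B i) (B j) ↔ le i j = true) := by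
  refine ⟨CPO.Aset le, CPO.Bset le, ?_, ?_, ?_⟩
  · exact ⟨CPO.gApprox le, CPO.gApprox_comp hle_comp, CPO.gApprox_limit le⟩
  · intro i
    constructor
    · obtain ⟨hcomp, hfib⟩ := CPO.B_bfo_A le hle_comp i
      refine ⟨CPO.bpos le i, hcomp, ⟨2, by norm_num, fun y => ?_⟩, fun x => Iff.rfl⟩
      exact_mod_cast hfib y
    · obtain ⟨f, hfc, hfi, hfm⟩ := CPO.A_le_B le hle_comp i
      refine ⟨f, hfc, ⟨1, le_refl 1, fun y => ?_⟩, hfm⟩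
      rw [show (((1:ℕ)) : ℕ∞) = 1 from by norm_cast, Set.encard_le_one_iff]
      intro a b ha hb
      exact hfi (ha.trans hb.symm)
  · intro i j
    constructor
    · rintro ⟨f, hfc, hfi, hfm⟩
      by_contra hne
      have hij : le i j = false := by
        rcases h : le i j
        · rfl
        · exact absurd h hne
      exact CPO.not_B_le_B le hrefl hij f hfc hfi hfm
    · intro hij
      exact CPO.B_le_B le hle_comp htrans hij
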